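/- Let $E:\mathbb{R}^d\to\mathbb{R}^d$ be bounded and log-Lipschitz: $|E(x)-E(y)|\leq C_2|x-y|(1+|\ln|x-y||)$ for $0<|x-y|<e^{-1}$ and $|E(x)-E(y)|\leq 2\|E\|_{L^\infty}$ always. Let $\gamma$ be a probability measure on $\mathbb{R}^d\times\mathbb{R}^d$ and set $\mathcal{E}=\int|x-y|^2\,d\gamma$. If $\mathcal{E}\leq e^{-1}$, then $\int|E(x)-E(y)|^2\,d\gamma\leq C\,(\mathcal{E}+\tfrac14 F(\mathcal{E}))$ where $F(u)=u(\ln u)^2$ and $C$ depends only on $C_2$ and $\|E\|_{L^\infty}$. -/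

import Mathlib

open MeasureTheory Real

noncomputable section

variable {d : ℕ}

local notation "E" => EuclideanSpace ℝ (Fin d)

lemma F_mono {u t : ℝ} (hu : 0 < u) (hut : u ≤ t) (ht : t ≤ Real.exp (-2)) :
    u * (Real.log u) ^ 2 ≤ t * (Real.log t) ^ 2 := by
  have hmono : MonotoneOn (fun x : ℝ => x * (Real.log x) ^ 2) (Set.Icc u t) := by
    have hconv : Convex ℝ (Set.Icc u t) := convex_Icc u t
    have hsub : Set.Icc u t ⊆ {(0:ℝ)}ᶜ := fun x hx => by
      have : 0 < x := lt_of_lt_of_le hu hx.1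
      simp [ne_of_gt this]
    have hcont : ContinuousOn (fun x : ℝ => x * (Real.log x) ^ 2) (Set.Icc u t) :=
      continuousOn_id.mul ((Real.continuousOn_log.mono hsub).pow 2)
    have hderiv : ∀ x ∈ interior (Set.Icc u t),
        HasDerivAt (fun x : ℝ => x * (Real.log x) ^ 2)
          ((Real.log x) ^ 2 + 2 * Real.log x) x := by
      intro x hx
      rw [interior_Icc] at hx
      have hx0 : x ≠ 0 := ne_of_gt (lt_trans hu hx.1)
      have h1 : HasDerivAt (fun x : ℝ => (Real.log x) ^ 2)
          (2 * Real.log x ^ 1 * x⁻¹) x := (Real.hasDerivAt_log hx0).pow 2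
      have h2 := (hasDerivAt_id x).mul h1
      refine h2.congr_deriv ?_
      have hxx : x * x⁻¹ = 1 := mul_inv_cancel₀ hx0
      simp only [id_eq]
      linear_combination (2 * Real.log x) * hxx
    apply monotoneOn_of_deriv_nonneg hconv hcont
    · intro x hx
      exact (hderiv x hx).differentiableAt.differentiableWithinAt
    · intro x hx
      rw [(hderiv x hx).deriv]
      rw [interior_Icc] at hx
      have hxlog : Real.log x ≤ -2 := by
        have : Real.log x ≤ Real.log (Real.exp (-2)) :=
          Real.log_le_log (lt_trans hu hx.1) (le_trans hx.2.le ht)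
        rwa [Real.log_exp] at this
      nlinarith [hxlog]
  exact hmono (Set.left_mem_Icc.2 hut) (Set.right_mem_Icc.2 hut) hut

lemma F_key {u t : ℝ} (hu0 : 0 ≤ u) (hu : u ≤ Real.exp (-2)) (ht0 : 0 < t)
    (ht : t ≤ Real.exp (-1)) :
    u * (Real.log u) ^ 2 ≤ 4 * (t * (Real.log t) ^ 2) + (Real.log t) ^ 2 * u := by
  rcases eq_or_lt_of_le hu0 with h | h
  · simp [← h]
    positivity
  rcases le_or_gt t (Real.exp (-2)) with hts | hts
  · rcases le_or_gt u t with hut | hut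
    · have := F_mono h hut hts
      nlinarith [sq_nonneg (Real.log t), mul_nonneg (sq_nonneg (Real.log t)) hu0,
        mul_nonneg ht0.le (sq_nonneg (Real.log t))]
    · have h1 : Real.log t ≤ Real.log u := Real.log_le_log ht0 hut.le
      have h2 : Real.log u ≤ -2 := by
        have := Real.log_le_log h hu
        rwa [Real.log_exp] at this
      have hsq : (Real.log u) ^ 2 ≤ (Real.log t) ^ 2 := by nlinarith
      have := mul_le_mul_of_nonneg_left hsq hu0
      nlinarith [mul_nonneg ht0.le (sq_nonneg (Real.log t))]
  · have h1 : u * (Real.log u) ^ 2 ≤ Real.exp (-2) * (Real.log (Real.exp (-2))) ^ 2 :=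
      F_mono h hu le_rfl
    rw [Real.log_exp] at h1
    have h2 : Real.log t ≤ -1 := by
      have := Real.log_le_log ht0 ht
      rwa [Real.log_exp] at this
    have h3 : (1:ℝ) ≤ (Real.log t) ^ 2 := by nlinarith
    nlinarith [mul_nonneg (sq_nonneg (Real.log t)) hu0, hts.le]

lemma arith_small {c m t r a b L X : ℝ} (hc : 0 ≤ c) (hm : 0 ≤ m) (hr : 0 ≤ r)
    (hL : 0 ≤ L) (hab : a ^ 2 = b ^ 2)
    (hX : X ≤ (c * r * (1 + a)) ^ 2)
    (hkey : r ^ 2 * (2 * b) ^ 2 ≤ 4 * (t * L) + L * r ^ 2) :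
    X ≤ (2 * c ^ 2 + m + c ^ 2 / 2 * L) * r ^ 2 + 2 * c ^ 2 * (t * L) := by
  have e2 : (1 + a) ^ 2 ≤ 2 + 2 * a ^ 2 := by nlinarith [sq_nonneg (1 - a)]
  have e3 : c ^ 2 * r ^ 2 * (1 + a) ^ 2 ≤ c ^ 2 * r ^ 2 * (2 + 2 * a ^ 2) :=
    mul_le_mul_of_nonneg_left e2 (by positivity)
  have e4 : c ^ 2 * r ^ 2 * (2 + 2 * a ^ 2)
      = 2 * c ^ 2 * r ^ 2 + c ^ 2 / 2 * (r ^ 2 * (2 * b) ^ 2) := by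
    linear_combination 2 * c ^ 2 * r ^ 2 * hab
  have e5 : c ^ 2 / 2 * (r ^ 2 * (2 * b) ^ 2) ≤ c ^ 2 / 2 * (4 * (t * L) + L * r ^ 2) :=
    mul_le_mul_of_nonneg_left hkey (by positivity)
  nlinarith [hX, e3, e4, e5, mul_nonneg hm (sq_nonneg r)]

lemma arith_big {c M t r L X e2 e2' : ℝ} (hc : 0 ≤ c) (hM : 0 ≤ M) (hL : 0 ≤ L)
    (ht : 0 ≤ t) (he2 : 0 ≤ e2) (h4 : e2 * e2' = 1)
    (hX : X ≤ (2 * M) ^ 2) (h3 : e2' ≤ r ^ 2) :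
    X ≤ (2 * c ^ 2 + 4 * M ^ 2 * e2 + c ^ 2 / 2 * L) * r ^ 2 + 2 * c ^ 2 * (t * L) := by
  have h5 : 4 * M ^ 2 * e2 * e2' ≤ 4 * M ^ 2 * e2 * r ^ 2 :=
    mul_le_mul_of_nonneg_left h3 (by positivity)
  have h6 : 4 * M ^ 2 * e2 * e2' = 4 * M ^ 2 := by linear_combination 4 * M ^ 2 * h4
  nlinarith [hX, h5, h6, mul_nonneg (sq_nonneg c) (sq_nonneg r),
    mul_nonneg (mul_nonneg (sq_nonneg c) hL) (sq_nonneg r),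
    mul_nonneg (sq_nonneg c) (mul_nonneg ht hL)]

lemma arith_final {c m t L e2 : ℝ} (hc : 0 ≤ c) (hm : 0 ≤ m) (ht : 0 ≤ t)
    (hL : 0 ≤ L) (he2 : 0 ≤ e2) :
    (2 * c ^ 2 + 4 * m ^ 2 * e2 + c ^ 2 / 2 * L) * t + 2 * c ^ 2 * (t * L)
      ≤ (12 * c ^ 2 + 4 * m ^ 2 * e2) * (t + t * L / 4) := by
  nlinarith [mul_nonneg (sq_nonneg c) ht, mul_nonneg (mul_nonneg (sq_nonneg c) ht) hL,
    mul_nonneg (mul_nonneg (mul_nonneg (sq_nonneg m) he2) ht) hL]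

/-- If `Ef` is bounded by `M₀` and log-Lipschitz with constant `C₂`, then for any
probability measure `γ` on `ℝ^d × ℝ^d` with `𝓔 = ∫ |x-y|² dγ ≤ e⁻¹`, one has
`∫ |Ef(x) - Ef(y)|² dγ ≤ C (𝓔 + F(𝓔)/4)` with `F(u) = u (ln u)²` and `C`
depending only on `C₂` and `M₀`. -/
theorem logLipschitz_field_estimate (d : ℕ) (C₂ M₀ : ℝ) (hC₂ : 0 ≤ C₂) (hM₀ : 0 ≤ M₀) :
    ∃ C : ℝ, 0 ≤ C ∧
    ∀ (Ef : EuclideanSpace ℝ (Fin d) → EuclideanSpace ℝ (Fin d)),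
      Measurable Ef →
      (∀ x, ‖Ef x‖ ≤ M₀) →
      (∀ x y, 0 < ‖x - y‖ → ‖x - y‖ < Real.exp (-1) →
        ‖Ef x - Ef y‖ ≤ C₂ * ‖x - y‖ * (1 + |Real.log ‖x - y‖|)) →
    ∀ (γ : Measure (EuclideanSpace ℝ (Fin d) × EuclideanSpace ℝ (Fin d))),
      IsProbabilityMeasure γ →
      Integrable (fun p => ‖p.1 - p.2‖ ^ 2) γ →
      (∫ p, ‖p.1 - p.2‖ ^ 2 ∂γ) ≤ Real.exp (-1) →
      (∫ p, ‖Ef p.1 - Ef p.2‖ ^ 2 ∂γ)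
        ≤ C * ((∫ p, ‖p.1 - p.2‖ ^ 2 ∂γ)
            + (∫ p, ‖p.1 - p.2‖ ^ 2 ∂γ) * (Real.log (∫ p, ‖p.1 - p.2‖ ^ 2 ∂γ)) ^ 2 / 4) := by
  refine ⟨12 * C₂ ^ 2 + 4 * M₀ ^ 2 * Real.exp 2, by positivity, ?_⟩
  intro Ef hmeas hbdd hlip γ hγ hint h𝓔
  set t := ∫ p, ‖p.1 - p.2‖ ^ 2 ∂γ with ht_def
  have ht0 : 0 ≤ t := integral_nonneg fun p => by positivity
  have hgmeas : AEStronglyMeasurable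
      (fun p : EuclideanSpace ℝ (Fin d) × EuclideanSpace ℝ (Fin d) =>
        ‖Ef p.1 - Ef p.2‖ ^ 2) γ :=
    ((((hmeas.comp measurable_fst).sub (hmeas.comp measurable_snd)).norm.pow_const
      2)).aestronglyMeasurable
  have hgint : Integrable
      (fun p : EuclideanSpace ℝ (Fin d) × EuclideanSpace ℝ (Fin d) =>
        ‖Ef p.1 - Ef p.2‖ ^ 2) γ := by
    refine (integrable_const ((2*M₀)^2)).mono' hgmeas ?_
    filter_upwards with p
    rw [Real.norm_eq_abs, abs_of_nonneg (by positivity)]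
    have h1 : ‖Ef p.1 - Ef p.2‖ ≤ 2 * M₀ := by
      calc ‖Ef p.1 - Ef p.2‖ ≤ ‖Ef p.1‖ + ‖Ef p.2‖ := norm_sub_le _ _
        _ ≤ 2 * M₀ := by linarith [hbdd p.1, hbdd p.2]
    exact pow_le_pow_left₀ (norm_nonneg _) h1 2
  rcases eq_or_lt_of_le ht0 with h0 | h0
  · -- degenerate case `t = 0`
    have hz : (fun p : EuclideanSpace ℝ (Fin d) × EuclideanSpace ℝ (Fin d) =>
        ‖p.1 - p.2‖ ^ 2) =ᵐ[γ] 0 := by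
      rw [← integral_eq_zero_iff_of_nonneg (fun p => by positivity) hint]
      exact h0.symm
    have hz2 : (fun p : EuclideanSpace ℝ (Fin d) × EuclideanSpace ℝ (Fin d) =>
        ‖Ef p.1 - Ef p.2‖ ^ 2) =ᵐ[γ] 0 := by
      filter_upwards [hz] with p hp
      simp only [Pi.zero_apply] at hp ⊢
      have h' : ‖p.1 - p.2‖ = 0 := by
        have := sq_nonneg ‖p.1 - p.2‖
        nlinarith [norm_nonneg (p.1 - p.2)]
      have hp12 : p.1 = p.2 := by rwa [norm_eq_zero, sub_eq_zero] at h'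
      rw [hp12]
      simp
    rw [integral_congr_ae hz2]
    simp only [Pi.zero_apply, integral_zero, ← h0]
    simp
  · -- main case `t > 0`
    have hL0 : 0 ≤ (Real.log t) ^ 2 := sq_nonneg _
    have hexp2 : Real.exp (-1) ^ 2 = Real.exp (-2) := by
      rw [sq, ← Real.exp_add]; norm_num
    have hA0 : 0 ≤ 2*C₂^2 + 4*M₀^2*Real.exp 2 + C₂^2/2 * (Real.log t)^2 := by positivity
    have hB0 : 0 ≤ 2*C₂^2 * (t * (Real.log t)^2) :=
      mul_nonneg (by positivity) (mul_nonneg ht0 hL0)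
    have hpt : ∀ p : EuclideanSpace ℝ (Fin d) × EuclideanSpace ℝ (Fin d),
        ‖Ef p.1 - Ef p.2‖ ^ 2 ≤
          (2*C₂^2 + 4*M₀^2*Real.exp 2 + C₂^2/2 * (Real.log t)^2) * ‖p.1 - p.2‖ ^ 2
            + 2*C₂^2 * (t * (Real.log t)^2) := by
      intro p
      have hr0 : 0 ≤ ‖p.1 - p.2‖ := norm_nonneg _
      rcases eq_or_lt_of_le hr0 with hrz | hrz
      · have hp12 : p.1 = p.2 := by
          have : ‖p.1 - p.2‖ = 0 := hrz.symm
          rwa [norm_eq_zero, sub_eq_zero] at this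
        have hz' : ‖Ef p.1 - Ef p.2‖ ^ 2 = 0 := by rw [hp12]; simp
        rw [hz']
        exact add_nonneg (mul_nonneg hA0 (by positivity)) hB0
      rcases lt_or_ge ‖p.1 - p.2‖ (Real.exp (-1)) with hsmall | hbig
      · have h1 := hlip p.1 p.2 hrz hsmall
        have h2 : ‖Ef p.1 - Ef p.2‖ ^ 2 ≤
            (C₂ * ‖p.1 - p.2‖ * (1 + |Real.log ‖p.1 - p.2‖|)) ^ 2 :=
          pow_le_pow_left₀ (norm_nonneg _) h1 2
        have hu : ‖p.1 - p.2‖ ^ 2 ≤ Real.exp (-2) := by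
          rw [← hexp2]; exact pow_le_pow_left₀ hr0 hsmall.le 2
        have hlogu : Real.log (‖p.1 - p.2‖ ^ 2) = 2 * Real.log ‖p.1 - p.2‖ := by
          rw [Real.log_pow]; norm_num
        have hkey := F_key (by positivity : (0:ℝ) ≤ ‖p.1 - p.2‖ ^ 2) hu h0 h𝓔
        rw [hlogu] at hkey
        exact arith_small hC₂ (by positivity) hr0 hL0
          (sq_abs (Real.log ‖p.1 - p.2‖)) h2 hkey
      · have h1 : ‖Ef p.1 - Ef p.2‖ ≤ 2 * M₀ := by
          calc ‖Ef p.1 - Ef p.2‖ ≤ ‖Ef p.1‖ + ‖Ef p.2‖ := norm_sub_le _ _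
            _ ≤ 2 * M₀ := by linarith [hbdd p.1, hbdd p.2]
        have h2 : ‖Ef p.1 - Ef p.2‖ ^ 2 ≤ (2*M₀) ^ 2 :=
          pow_le_pow_left₀ (norm_nonneg _) h1 2
        have h3 : Real.exp (-2) ≤ ‖p.1 - p.2‖ ^ 2 := by
          rw [← hexp2]; exact pow_le_pow_left₀ (Real.exp_pos _).le hbig 2
        have h4 : Real.exp 2 * Real.exp (-2) = 1 := by rw [← Real.exp_add]; norm_num
        exact arith_big hC₂ hM₀ hL0 ht0 (Real.exp_pos 2).le h4 h2 h3
    have hbint : Integrable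
        (fun p : EuclideanSpace ℝ (Fin d) × EuclideanSpace ℝ (Fin d) =>
          (2*C₂^2 + 4*M₀^2*Real.exp 2 + C₂^2/2 * (Real.log t)^2) * ‖p.1 - p.2‖ ^ 2
            + 2*C₂^2 * (t * (Real.log t)^2)) γ :=
      (hint.const_mul _).add (integrable_const _)
    have hmain : (∫ p, ‖Ef p.1 - Ef p.2‖ ^ 2 ∂γ) ≤
        (2*C₂^2 + 4*M₀^2*Real.exp 2 + C₂^2/2 * (Real.log t)^2) * t
          + 2*C₂^2 * (t * (Real.log t)^2) := by
      calc (∫ p, ‖Ef p.1 - Ef p.2‖ ^ 2 ∂γ)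
          ≤ ∫ p, ((2*C₂^2 + 4*M₀^2*Real.exp 2 + C₂^2/2 * (Real.log t)^2) * ‖p.1 - p.2‖ ^ 2
              + 2*C₂^2 * (t * (Real.log t)^2)) ∂γ :=
            integral_mono hgint hbint hpt
        _ = (2*C₂^2 + 4*M₀^2*Real.exp 2 + C₂^2/2 * (Real.log t)^2) * t
              + 2*C₂^2 * (t * (Real.log t)^2) := by
            rw [integral_add (hint.const_mul _) (integrable_const _),
              integral_const_mul, integral_const]
            simp [← ht_def]
    exact le_trans hmain (arith_final hC₂ hM₀ ht0 hL0 (Real.exp_pos 2).le)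

end
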